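/- Let ℱ be a nonempty closed convex set of free states, 𝔉 a set of channels each of which maps ℱ into ℱ, and assume that for every σ ∈ ℱ the replacement channel τ ↦ Tr(τ)σ belongs to 𝔉. Then for every channel N, the maximum success probability of discriminating N from 𝔉 using free probe states equals p_succ(N, 𝔉, ℱ) = 1/2 + (1/2)·Ω̃₁(N) = 1/2 + (1/2)·Ω₁(N). -/

import Mathlib

open scoped Kronecker ComplexOrder

variable {ι : Type*} [Fintype ι] [DecidableEq ι]

/-- A quantum state: positive semidefinite matrix of trace one. -/
def IsState (ρ : Matrix ι ι ℂ) : Prop := ρ.PosSemidef ∧ ρ.trace = 1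

/-- The action of `id_n ⊗ N` on block matrices. -/
def idTensorMap (n : ℕ) (N : Matrix ι ι ℂ →ₗ[ℂ] Matrix ι ι ℂ)
    (M : Matrix (Fin n × ι) (Fin n × ι) ℂ) : Matrix (Fin n × ι) (Fin n × ι) ℂ :=
  Matrix.of fun p q => N (Matrix.of fun k l => M (p.1, k) (q.1, l)) p.2 q.2

/-- A quantum channel: completely positive trace preserving linear map. -/
structure Channel (ι : Type*) [Fintype ι] [DecidableEq ι] where
  map : Matrix ι ι ℂ →ₗ[ℂ] Matrix ι ι ℂ
  cp : ∀ (n : ℕ) (M : Matrix (Fin n × ι) (Fin n × ι) ℂ), M.PosSemidef →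
        (idTensorMap n map M).PosSemidef
  tp : ∀ A : Matrix ι ι ℂ, (map A).trace = A.trace

/-- The trace norm ‖A‖₁ = Tr √(AᴴA). -/
noncomputable def traceNorm (A : Matrix ι ι ℂ) : ℝ :=
  (((Matrix.posSemidef_conjTranspose_mul_self A).1.eigenvectorUnitary : Matrix ι ι ℂ) *
    Matrix.diagonal ((fun x : ℝ => (x : ℂ)) ∘ (Real.sqrt ·) ∘ (Matrix.posSemidef_conjTranspose_mul_self A).1.eigenvalues) *
    (star ((Matrix.posSemidef_conjTranspose_mul_self A).1.eigenvectorUnitary : Matrix ι ι ℂ))).trace.re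

/-- Trace-norm resource measure ω₁. -/
noncomputable def omega1 (F : Set (Matrix ι ι ℂ)) (ρ : Matrix ι ι ℂ) : ℝ :=
  (1/2) * sInf ((fun σ => traceNorm (ρ - σ)) '' F)

/-- Trace-norm resource generating power Ω₁. -/
noncomputable def genPower1 (F : Set (Matrix ι ι ℂ)) (N : Matrix ι ι ℂ → Matrix ι ι ℂ) : ℝ :=
  sSup ((fun ρ => omega1 F (N ρ)) '' F)

/-- Trace-norm resource increasing power Ω̃₁. -/
noncomputable def incPower1 (F : Set (Matrix ι ι ℂ)) (N : Matrix ι ι ℂ → Matrix ι ι ℂ) : ℝ :=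
  sSup ((fun ρ => omega1 F (N ρ) - omega1 F ρ) '' {ρ | IsState ρ})

/-- Holevo–Helstrom success probability of discriminating two channels with probe `ρ`. -/
noncomputable def psuccPair (N M : Matrix ι ι ℂ → Matrix ι ι ℂ) (ρ : Matrix ι ι ℂ) : ℝ :=
  1/2 + (1/4) * traceNorm (N ρ - M ρ)

/-- Success probability of discriminating `N` from the set of channels `Free` with probe `ρ`. -/
noncomputable def psuccChan (N : Matrix ι ι ℂ → Matrix ι ι ℂ) (Free : Set (Channel ι))
    (ρ : Matrix ι ι ℂ) : ℝ :=
  sInf ((fun M : Channel ι => psuccPair N (⇑M.map) ρ) '' Free)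

/-- Maximum success probability of discriminating `N` from `Free` using probes from `F`. -/
noncomputable def psuccFF (N : Matrix ι ι ℂ → Matrix ι ι ℂ) (Free : Set (Channel ι))
    (F : Set (Matrix ι ι ℂ)) : ℝ :=
  sSup ((fun ρ => psuccChan N Free ρ) '' F)

section Aux

open Matrix

variable {ι : Type*} [Fintype ι] [DecidableEq ι]

lemma psd_diag_re_nonneg {M : Matrix ι ι ℂ} (hM : M.PosSemidef) (i : ι) :
    0 ≤ (M i i).re := by
  have h := hM.dotProduct_mulVec_nonneg (Pi.single i 1)
  have he : dotProduct (star (Pi.single i 1 : ι → ℂ)) (M *ᵥ Pi.single i 1) = M i i := by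
    rw [Matrix.mulVec_single, ← Pi.single_star, star_one, single_dotProduct]
    simp
  rw [he] at h
  exact (Complex.le_def.mp h).1

lemma psd_trace_re_nonneg {M : Matrix ι ι ℂ} (hM : M.PosSemidef) :
    0 ≤ M.trace.re := by
  rw [Matrix.trace, Complex.re_sum]
  exact Finset.sum_nonneg fun i _ => psd_diag_re_nonneg hM i

lemma conj_mul_conj {W : Matrix ι ι ℂ} (hW2 : star W * W = 1) (A B : Matrix ι ι ℂ) :
    (W * A * star W) * (W * B * star W) = W * (A * B) * star W := by
  have cancel : ∀ X : Matrix ι ι ℂ, star W * (W * X) = X := fun X => by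
    rw [← Matrix.mul_assoc, hW2, Matrix.one_mul]
  simp only [Matrix.mul_assoc, cancel]

lemma rclike_ofReal (r : ℝ) : (RCLike.ofReal r : ℂ) = Complex.ofReal r := rfl

lemma conj_psd {W : Matrix ι ι ℂ} {A : Matrix ι ι ℂ} (hA : A.PosSemidef) :
    (W * A * star W).PosSemidef := by
  simpa [Matrix.star_eq_conjTranspose] using hA.mul_mul_conjTranspose_same W

lemma conj_trace {W : Matrix ι ι ℂ} (hW2 : star W * W = 1) (A : Matrix ι ι ℂ) :
    (W * A * star W).trace = A.trace := by
  rw [Matrix.trace_mul_cycle, hW2, Matrix.one_mul]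

lemma diag_real_psd (f : ι → ℝ) (hf : ∀ i, 0 ≤ f i) :
    (Matrix.diagonal (fun i => (f i : ℂ))).PosSemidef :=
  Matrix.posSemidef_diagonal_iff.mpr fun i => by
    simpa using Complex.zero_le_real.mpr (hf i)

lemma traceNorm_expr_eq_cfc (A : Matrix ι ι ℂ) :
    ((Matrix.posSemidef_conjTranspose_mul_self A).1.eigenvectorUnitary : Matrix ι ι ℂ) *
    Matrix.diagonal ((fun x : ℝ => (x : ℂ)) ∘ (Real.sqrt ·) ∘ (Matrix.posSemidef_conjTranspose_mul_self A).1.eigenvalues) *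
    (star ((Matrix.posSemidef_conjTranspose_mul_self A).1.eigenvectorUnitary : Matrix ι ι ℂ))
      = cfc Real.sqrt (A.conjTranspose * A) := by
  rw [(Matrix.posSemidef_conjTranspose_mul_self A).1.cfc_eq, Matrix.IsHermitian.cfc,
    Unitary.conjStarAlgAut_apply]
  rfl

open scoped MatrixOrder in
lemma cfc_sqrt_mul_self_psd {B : Matrix ι ι ℂ} (hB : B.PosSemidef) :
    cfc Real.sqrt (B * B) = B := by
  have h0 : 0 ≤ B := hB.nonneg
  have h1 : 0 ≤ B * B := by
    have := Matrix.posSemidef_conjTranspose_mul_self B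
    rw [hB.1.eq] at this
    exact this.nonneg
  rw [← cfcₙ_eq_cfc, ← CFC.sqrt_eq_real_sqrt _ h1, CFC.sqrt_mul_self B]

lemma traceNorm_eq_sum_abs {C : Matrix ι ι ℂ} (hC : C.IsHermitian) :
    traceNorm C = ∑ i, |hC.eigenvalues i| := by
  classical
  set W : Matrix ι ι ℂ := ↑hC.eigenvectorUnitary with hW
  have hW2 : star W * W = 1 := Matrix.mem_unitaryGroup_iff'.mp hC.eigenvectorUnitary.2
  set g : ι → ℂ := fun i => ((|hC.eigenvalues i| : ℝ) : ℂ) with hg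
  set B : Matrix ι ι ℂ := W * Matrix.diagonal g * star W with hB
  have hBpsd : B.PosSemidef := by
    rw [hB, hg]
    exact conj_psd (diag_real_psd _ fun i => abs_nonneg _)
  have hspec : C = W * Matrix.diagonal (RCLike.ofReal ∘ hC.eigenvalues) * star W :=
    hC.spectral_theorem
  have hsq : B ^ 2 = Cᴴ * C := by
    rw [hC.eq, pow_two, hB, conj_mul_conj hW2]
    conv_rhs => rw [hspec]
    rw [conj_mul_conj hW2, Matrix.diagonal_mul_diagonal, Matrix.diagonal_mul_diagonal]
    have hgg : (fun i => g i * g i)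
        = fun i => (RCLike.ofReal ∘ hC.eigenvalues) i * (RCLike.ofReal ∘ hC.eigenvalues) i := by
      funext i
      simp only [Function.comp_apply, hg, rclike_ofReal]
      rw [← Complex.ofReal_mul, ← Complex.ofReal_mul, abs_mul_abs_self]
    rw [hgg]
  have hBsqrt : B = ((Matrix.posSemidef_conjTranspose_mul_self C).1.eigenvectorUnitary : Matrix ι ι ℂ) *
      Matrix.diagonal ((fun x : ℝ => (x : ℂ)) ∘ (Real.sqrt ·) ∘ (Matrix.posSemidef_conjTranspose_mul_self C).1.eigenvalues) *
      (star ((Matrix.posSemidef_conjTranspose_mul_self C).1.eigenvectorUnitary : Matrix ι ι ℂ)) := by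
    rw [traceNorm_expr_eq_cfc, ← hsq, pow_two, cfc_sqrt_mul_self_psd hBpsd]
  rw [traceNorm, ← hBsqrt, hB, conj_trace hW2, Matrix.trace_diagonal, Complex.re_sum]
  simp [hg]

lemma trace_eq_sum_eigs {C : Matrix ι ι ℂ} (hC : C.IsHermitian) :
    C.trace = ∑ i, (hC.eigenvalues i : ℂ) := by
  have hW2 : star (hC.eigenvectorUnitary : Matrix ι ι ℂ) * (hC.eigenvectorUnitary : Matrix ι ι ℂ) = 1 :=
    Matrix.mem_unitaryGroup_iff'.mp hC.eigenvectorUnitary.2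
  conv_lhs => rw [hC.spectral_theorem, Unitary.conjStarAlgAut_apply]
  rw [conj_trace hW2, Matrix.trace_diagonal]
  simp [rclike_ofReal]

lemma traceNorm_psd {P : Matrix ι ι ℂ} (hP : P.PosSemidef) :
    traceNorm P = P.trace.re := by
  rw [traceNorm_eq_sum_abs hP.1, trace_eq_sum_eigs hP.1, Complex.re_sum]
  exact Finset.sum_congr rfl fun i _ => by
    rw [Complex.ofReal_re, abs_of_nonneg (hP.eigenvalues_nonneg i)]

lemma traceNorm_zero : traceNorm (0 : Matrix ι ι ℂ) = 0 := by
  rw [traceNorm_psd Matrix.PosSemidef.zero]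
  simp

lemma traceNorm_nonneg (A : Matrix ι ι ℂ) : 0 ≤ traceNorm A :=
  by
    unfold traceNorm
    exact psd_trace_re_nonneg (conj_psd (diag_real_psd
      (fun i => Real.sqrt ((Matrix.posSemidef_conjTranspose_mul_self A).1.eigenvalues i))
      fun i => Real.sqrt_nonneg _))

/-- Key lemma: trace norm of a difference of PSD matrices is at most the sum of traces. -/
lemma traceNorm_sub_le_trace {P Q : Matrix ι ι ℂ} (hP : P.PosSemidef) (hQ : Q.PosSemidef) :
    traceNorm (P - Q) ≤ P.trace.re + Q.trace.re := by
  classical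
  have hC : (P - Q).IsHermitian := hP.1.sub hQ.1
  rw [traceNorm_eq_sum_abs hC]
  set W : Matrix ι ι ℂ := ↑hC.eigenvectorUnitary with hW
  have hW1 : W * star W = 1 := Matrix.mem_unitaryGroup_iff.mp hC.eigenvectorUnitary.2
  have hdiag : star W * (P - Q) * W = Matrix.diagonal (RCLike.ofReal ∘ hC.eigenvalues) :=
    by
      have hW2 : star W * W = 1 := Matrix.mem_unitaryGroup_iff'.mp hC.eigenvectorUnitary.2
      have hs := hC.spectral_theorem
      rw [Unitary.conjStarAlgAut_apply, ← hW] at hs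
      conv_lhs => rw [hs]
      simp only [← Matrix.mul_assoc]
      rw [hW2, Matrix.one_mul, Matrix.mul_assoc, hW2, Matrix.mul_one]
  have hPU : (star W * P * W).PosSemidef := by
    simpa [Matrix.star_eq_conjTranspose] using hP.conjTranspose_mul_mul_same W
  have hQU : (star W * Q * W).PosSemidef := by
    simpa [Matrix.star_eq_conjTranspose] using hQ.conjTranspose_mul_mul_same W
  have hlam : ∀ i, hC.eigenvalues i
      = ((star W * P * W) i i).re - ((star W * Q * W) i i).re := by
    intro i
    have hexp : star W * (P - Q) * W = star W * P * W - star W * Q * W := by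
      rw [Matrix.mul_sub, Matrix.sub_mul]
    have h2 : ((star W * P * W) - (star W * Q * W)) i i = (hC.eigenvalues i : ℂ) := by
      rw [← hexp, hdiag]
      simp [Matrix.diagonal_apply_eq, rclike_ofReal]
    have h3 := congrArg Complex.re h2
    simpa [Complex.sub_re] using h3.symm
  have htr : ∀ {R : Matrix ι ι ℂ}, (star W * R * W).trace = R.trace := by
    intro R
    rw [Matrix.trace_mul_cycle, hW1, Matrix.one_mul]
  calc ∑ i, |hC.eigenvalues i|
      ≤ ∑ i, (((star W * P * W) i i).re + ((star W * Q * W) i i).re) := by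
        refine Finset.sum_le_sum fun i _ => ?_
        rw [hlam i]
        have h1 := psd_diag_re_nonneg hPU i
        have h2 := psd_diag_re_nonneg hQU i
        exact abs_le.mpr ⟨by linarith, by linarith⟩
    _ = (star W * P * W).trace.re + (star W * Q * W).trace.re := by
        rw [Matrix.trace, Matrix.trace, Complex.re_sum, Complex.re_sum,
          ← Finset.sum_add_distrib]
        rfl
    _ = P.trace.re + Q.trace.re := by rw [htr, htr]

/-- Jordan decomposition realizing the trace norm. -/
lemma jordan {C : Matrix ι ι ℂ} (hC : C.IsHermitian) :
    ∃ P Q : Matrix ι ι ℂ, P.PosSemidef ∧ Q.PosSemidef ∧ C = P - Q ∧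
      traceNorm C = P.trace.re + Q.trace.re := by
  classical
  set W : Matrix ι ι ℂ := ↑hC.eigenvectorUnitary with hW
  have hW2 : star W * W = 1 := Matrix.mem_unitaryGroup_iff'.mp hC.eigenvectorUnitary.2
  set p : ι → ℝ := fun i => max (hC.eigenvalues i) 0 with hp
  set q : ι → ℝ := fun i => max (-hC.eigenvalues i) 0 with hq
  refine ⟨W * Matrix.diagonal (fun i => (p i : ℂ)) * star W,
    W * Matrix.diagonal (fun i => (q i : ℂ)) * star W,
    conj_psd (diag_real_psd _ fun i => le_max_right _ _),
    conj_psd (diag_real_psd _ fun i => le_max_right _ _), ?_, ?_⟩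
  · have hD : (Matrix.diagonal (RCLike.ofReal ∘ hC.eigenvalues) : Matrix ι ι ℂ)
        = Matrix.diagonal (fun i => (p i : ℂ)) - Matrix.diagonal (fun i => (q i : ℂ)) := by
      rw [Matrix.diagonal_sub]
      have hfun : (RCLike.ofReal ∘ hC.eigenvalues : ι → ℂ)
          = (fun i => (p i : ℂ)) - fun i => (q i : ℂ) := by
        funext i
        simp only [Function.comp_apply, Pi.sub_apply, rclike_ofReal, hp, hq]
        rw [← Complex.ofReal_sub]
        congr 1
        rcases le_total (hC.eigenvalues i) 0 with h | h
        · rw [max_eq_right h, max_eq_left (by linarith)]; ring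
        · rw [max_eq_left h, max_eq_right (by linarith)]; ring
      rw [hfun]
      rfl
    conv_lhs => rw [hC.spectral_theorem, Unitary.conjStarAlgAut_apply, hD]
    rw [Matrix.mul_sub, Matrix.sub_mul]
  · rw [traceNorm_eq_sum_abs hC, conj_trace hW2, conj_trace hW2,
      Matrix.trace_diagonal, Matrix.trace_diagonal, Complex.re_sum, Complex.re_sum,
      ← Finset.sum_add_distrib]
    refine Finset.sum_congr rfl fun i _ => ?_
    simp only [Complex.ofReal_re, hp, hq]
    exact (max_zero_add_max_neg_zero_eq_abs_self _).symm

/-- Triangle inequality for the trace norm of Hermitian matrices. -/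
lemma traceNorm_add_le {A B : Matrix ι ι ℂ} (hA : A.IsHermitian) (hB : B.IsHermitian) :
    traceNorm (A + B) ≤ traceNorm A + traceNorm B := by
  obtain ⟨P1, Q1, hP1, hQ1, hd1, ht1⟩ := jordan hA
  obtain ⟨P2, Q2, hP2, hQ2, hd2, ht2⟩ := jordan hB
  have hsum : A + B = (P1 + P2) - (Q1 + Q2) := by rw [hd1, hd2]; abel
  rw [hsum, ht1, ht2]
  calc traceNorm ((P1 + P2) - (Q1 + Q2))
      ≤ (P1 + P2).trace.re + (Q1 + Q2).trace.re :=
        traceNorm_sub_le_trace (hP1.add hP2) (hQ1.add hQ2)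
    _ = (P1.trace.re + Q1.trace.re) + (P2.trace.re + Q2.trace.re) := by
        rw [Matrix.trace_add, Matrix.trace_add, Complex.add_re, Complex.add_re]; ring

/-- A channel maps PSD matrices to PSD matrices. -/
lemma channel_psd (N : Channel ι) {A : Matrix ι ι ℂ} (hA : A.PosSemidef) :
    (N.map A).PosSemidef := by
  have h := N.cp 1 (A.submatrix Prod.snd Prod.snd) (hA.submatrix Prod.snd)
  have h2 := h.submatrix (fun a : ι => ((0 : Fin 1), a))
  have heq : N.map A
      = (idTensorMap 1 N.map (A.submatrix Prod.snd Prod.snd)).submatrix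
        (fun a : ι => ((0 : Fin 1), a)) (fun a : ι => ((0 : Fin 1), a)) := by
    ext a b; rfl
  rw [heq]; exact h2

/-- Trace-norm contractivity of channels on Hermitian matrices. -/
lemma traceNorm_map_le (N : Channel ι) {A : Matrix ι ι ℂ} (hA : A.IsHermitian) :
    traceNorm (N.map A) ≤ traceNorm A := by
  obtain ⟨P, Q, hP, hQ, hd, ht⟩ := jordan hA
  rw [hd] at ht ⊢
  rw [ht, map_sub]
  calc traceNorm (N.map P - N.map Q)
      ≤ (N.map P).trace.re + (N.map Q).trace.re :=
        traceNorm_sub_le_trace (channel_psd N hP) (channel_psd N hQ)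
    _ = P.trace.re + Q.trace.re := by rw [N.tp, N.tp]

lemma sInf_affine {T : Set ℝ} (hT : T.Nonempty) (hbd : BddBelow T) (a : ℝ) {c : ℝ}
    (hc : 0 ≤ c) : sInf ((fun x => a + c * x) '' T) = a + c * sInf T := by
  have hmono : Monotone (fun x : ℝ => a + c * x) := fun x y h =>
    add_le_add_right (mul_le_mul_of_nonneg_left h hc) a
  exact (hmono.map_csInf_of_continuousAt
    ((continuous_const.add (continuous_const.mul continuous_id)).continuousAt) hT hbd).symm

lemma sSup_affine {T : Set ℝ} (hT : T.Nonempty) (hbd : BddAbove T) (a : ℝ) {c : ℝ}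
    (hc : 0 ≤ c) : sSup ((fun x => a + c * x) '' T) = a + c * sSup T := by
  have hmono : Monotone (fun x : ℝ => a + c * x) := fun x y h =>
    add_le_add_right (mul_le_mul_of_nonneg_left h hc) a
  exact (hmono.map_csSup_of_continuousAt
    ((continuous_const.add (continuous_const.mul continuous_id)).continuousAt) hT hbd).symm

end Aux

/-- the maximum success probability of discriminating `N` from the free channels
using free probe states is `1/2 + Ω̃₁(N)/2 = 1/2 + Ω₁(N)/2`. -/
theorem stmt2
    (F : Set (Matrix ι ι ℂ)) (hFne : F.Nonempty) (hFstate : ∀ ρ ∈ F, IsState ρ)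
    (hFconv : Convex ℝ F) (hFclosed : IsClosed F)
    (Free : Set (Channel ι))
    (hFree : ∀ M ∈ Free, ∀ ρ ∈ F, M.map ρ ∈ F)
    (hRepl : ∀ σ ∈ F, ∃ M ∈ Free, ∀ τ : Matrix ι ι ℂ, M.map τ = τ.trace • σ)
    (N : Channel ι) :
    psuccFF (⇑N.map) Free F = 1/2 + (1/2) * incPower1 F (⇑N.map) ∧
    psuccFF (⇑N.map) Free F = 1/2 + (1/2) * genPower1 F (⇑N.map) := by
  classical
  obtain ⟨σ₀, hσ₀⟩ := hFne
  have hσ₀s := hFstate σ₀ hσ₀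
  have htn_bdd : ∀ X : Matrix ι ι ℂ, BddBelow ((fun σ => traceNorm (X - σ)) '' F) :=
    fun X => ⟨0, by rintro t ⟨σ, hσ, rfl⟩; exact traceNorm_nonneg _⟩
  have htn_ne : ∀ X : Matrix ι ι ℂ, ((fun σ => traceNorm (X - σ)) '' F).Nonempty :=
    fun X => ⟨_, ⟨σ₀, hσ₀, rfl⟩⟩
  have hω_nonneg : ∀ X : Matrix ι ι ℂ, 0 ≤ omega1 F X := by
    intro X
    have h : 0 ≤ sInf ((fun σ => traceNorm (X - σ)) '' F) :=
      Real.sInf_nonneg (by rintro t ⟨σ, hσ, rfl⟩; exact traceNorm_nonneg _)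
    rw [omega1]; linarith
  have hωle : ∀ (X : Matrix ι ι ℂ), ∀ σ ∈ F, omega1 F X ≤ (1/2) * traceNorm (X - σ) := by
    intro X σ hσ
    have h := csInf_le (htn_bdd X) (⟨σ, hσ, rfl⟩ :
      traceNorm (X - σ) ∈ (fun σ => traceNorm (X - σ)) '' F)
    rw [omega1]; linarith
  have hω0 : ∀ ρ ∈ F, omega1 F ρ = 0 := by
    intro ρ hρ
    refine le_antisymm ?_ (hω_nonneg ρ)
    have h := hωle ρ ρ hρ
    simpa [sub_self, traceNorm_zero] using h
  have hNstate : ∀ ρ : Matrix ι ι ℂ, IsState ρ → IsState (N.map ρ) :=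
    fun ρ hρ => ⟨channel_psd N hρ.1, (N.tp ρ).trans hρ.2⟩
  have htr_one : ∀ X : Matrix ι ι ℂ, IsState X → X.trace.re = 1 := by
    intro X hX; rw [hX.2]; simp
  have hω_le_one : ∀ X : Matrix ι ι ℂ, IsState X → omega1 F X ≤ 1 := by
    intro X hX
    have h1 := hωle X σ₀ hσ₀
    have h2 := traceNorm_sub_le_trace hX.1 hσ₀s.1
    rw [htr_one X hX, htr_one σ₀ hσ₀s] at h2
    linarith
  have hchan : ∀ ρ ∈ F, psuccChan (⇑N.map) Free ρ = 1/2 + (1/2) * omega1 F (N.map ρ) := by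
    intro ρ hρ
    have hρtr : ρ.trace = 1 := (hFstate ρ hρ).2
    have hsets : (fun M : Channel ι => psuccPair (⇑N.map) (⇑M.map) ρ) '' Free
        = (fun x => 1/2 + (1/4) * x) '' ((fun σ => traceNorm (N.map ρ - σ)) '' F) := by
      rw [Set.image_image]
      apply Set.Subset.antisymm
      · rintro _ ⟨M, hM, rfl⟩
        exact ⟨M.map ρ, hFree M hM ρ hρ, rfl⟩
      · rintro _ ⟨σ, hσ, rfl⟩
        obtain ⟨M, hM, hMρ⟩ := hRepl σ hσ
        refine ⟨M, hM, ?_⟩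
        simp [psuccPair, hMρ ρ, hρtr]
    rw [psuccChan, hsets,
      sInf_affine (htn_ne _) (htn_bdd _) _ (by norm_num : (0:ℝ) ≤ 1/4)]
    rw [omega1]; ring
  have hgen_ne : ((fun ρ => omega1 F (N.map ρ)) '' F).Nonempty := ⟨_, ⟨σ₀, hσ₀, rfl⟩⟩
  have hgen_bdd : BddAbove ((fun ρ => omega1 F (N.map ρ)) '' F) := by
    refine ⟨1, ?_⟩
    rintro x ⟨ρ, hρ, rfl⟩
    exact hω_le_one _ (hNstate ρ (hFstate ρ hρ))
  have hgen_def : genPower1 F (⇑N.map) = sSup ((fun ρ => omega1 F (N.map ρ)) '' F) := rfl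
  have hFF : psuccFF (⇑N.map) Free F = 1/2 + (1/2) * genPower1 F (⇑N.map) := by
    have himg : (fun ρ => psuccChan (⇑N.map) Free ρ) '' F
        = (fun x => 1/2 + (1/2) * x) '' ((fun ρ => omega1 F (N.map ρ)) '' F) := by
      rw [Set.image_image]
      exact Set.image_congr hchan
    rw [psuccFF, himg,
      sSup_affine hgen_ne hgen_bdd _ (by norm_num : (0:ℝ) ≤ 1/2), hgen_def]
  have hinc_def : incPower1 F (⇑N.map)
      = sSup ((fun ρ => omega1 F (N.map ρ) - omega1 F ρ) '' {ρ | IsState ρ}) := rfl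
  have hinc_ne : ((fun ρ => omega1 F (N.map ρ) - omega1 F ρ) '' {ρ | IsState ρ}).Nonempty :=
    ⟨_, ⟨σ₀, hσ₀s, rfl⟩⟩
  have hinc_bdd : BddAbove ((fun ρ => omega1 F (N.map ρ) - omega1 F ρ) '' {ρ | IsState ρ}) := by
    refine ⟨1, ?_⟩
    rintro x ⟨ρ, hρ, rfl⟩
    have h1 := hω_le_one _ (hNstate ρ hρ)
    have h2 := hω_nonneg ρ
    show omega1 F (N.map ρ) - omega1 F ρ ≤ 1
    linarith
  have hG : ∀ σ ∈ F, omega1 F (N.map σ) ≤ genPower1 F (⇑N.map) := by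
    intro σ hσ
    rw [hgen_def]
    exact le_csSup hgen_bdd ⟨σ, hσ, rfl⟩
  have h1 : genPower1 F (⇑N.map) ≤ incPower1 F (⇑N.map) := by
    rw [hgen_def, hinc_def]
    refine csSup_le hgen_ne ?_
    rintro x ⟨ρ, hρ, rfl⟩
    have hmem : omega1 F (N.map ρ) - omega1 F ρ
        ∈ (fun ρ => omega1 F (N.map ρ) - omega1 F ρ) '' {ρ | IsState ρ} :=
      ⟨ρ, hFstate ρ hρ, rfl⟩
    have hle := le_csSup hinc_bdd hmem
    rw [hω0 ρ hρ] at hle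
    simpa using hle
  have h2 : incPower1 F (⇑N.map) ≤ genPower1 F (⇑N.map) := by
    rw [hinc_def]
    refine csSup_le hinc_ne ?_
    rintro x ⟨ρ, hρ, rfl⟩
    simp only [Set.mem_setOf_eq] at hρ
    show omega1 F (N.map ρ) - omega1 F ρ ≤ genPower1 F (⇑N.map)
    by_contra hcon
    push_neg at hcon
    set ε := (omega1 F (N.map ρ) - omega1 F ρ - genPower1 F (⇑N.map)) / 2 with hε
    have hεpos : 0 < ε := by rw [hε]; linarith
    obtain ⟨t, htmem, hlt⟩ := Real.lt_sInf_add_pos (htn_ne ρ) (by linarith : (0:ℝ) < 2 * ε)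
    obtain ⟨σ, hσ, rfl⟩ := htmem
    have hσs := hFstate σ hσ
    have homega : omega1 F ρ = (1/2) * sInf ((fun σ => traceNorm (ρ - σ)) '' F) := rfl
    have hlt2 : (1/2) * traceNorm (ρ - σ) < omega1 F ρ + ε := by
      rw [homega]; linarith
    have hstep : omega1 F (N.map ρ)
        ≤ omega1 F (N.map σ) + (1/2) * traceNorm (N.map ρ - N.map σ) := by
      have hkey : ∀ τ ∈ F,
          omega1 F (N.map ρ) - (1/2) * traceNorm (N.map ρ - N.map σ)
            ≤ (1/2) * traceNorm (N.map σ - τ) := by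
        intro τ hτ
        have h3 := hωle (N.map ρ) τ hτ
        have herm1 : (N.map ρ - N.map σ).IsHermitian :=
          ((channel_psd N hρ.1).1).sub (channel_psd N hσs.1).1
        have herm2 : (N.map σ - τ).IsHermitian :=
          (channel_psd N hσs.1).1.sub (hFstate τ hτ).1.1
        have htri : traceNorm (N.map ρ - τ)
            ≤ traceNorm (N.map ρ - N.map σ) + traceNorm (N.map σ - τ) := by
          have hdec : N.map ρ - τ = (N.map ρ - N.map σ) + (N.map σ - τ) := by abel
          rw [hdec]
          exact traceNorm_add_le herm1 herm2
        linarith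
      have h4 : 2 * (omega1 F (N.map ρ) - (1/2) * traceNorm (N.map ρ - N.map σ))
          ≤ sInf ((fun τ => traceNorm (N.map σ - τ)) '' F) := by
        refine le_csInf (htn_ne _) ?_
        rintro b ⟨τ, hτ, rfl⟩
        have h5 := hkey τ hτ
        linarith
      have homega2 : omega1 F (N.map σ)
          = (1/2) * sInf ((fun τ => traceNorm (N.map σ - τ)) '' F) := rfl
      rw [homega2]
      linarith
    have hcontr : traceNorm (N.map ρ - N.map σ) ≤ traceNorm (ρ - σ) := by
      have hdec : N.map ρ - N.map σ = N.map (ρ - σ) := (map_sub _ _ _).symm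
      rw [hdec]
      exact traceNorm_map_le N (hρ.1.1.sub hσs.1.1)
    have hGσ := hG σ hσ
    linarith
  have hIG : incPower1 F (⇑N.map) = genPower1 F (⇑N.map) := le_antisymm h2 h1
  exact ⟨by rw [hFF, hIG], hFF⟩
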